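/- If a random variable ξ satisfies 0 < ‖ξ‖G(ψ) < ∞ where ‖ξ‖G(ψ) = sup_{p∈(a,∞)} (E|ξ|^p)^{1/p}/ψ(p), then its two-sided tail function satisfies T_ξ(x) ≤ exp{−[p ↦ p ln ψ(p)]*(ln(x/‖ξ‖G(ψ)))} for all x ≥ 2‖ξ‖G(ψ), where T_ξ(x) = max(P(ξ > x), P(ξ < −x)) and f* is the Legendre transform. -/

import Mathlib

open MeasureTheory Set
open scoped ENNReal

/-- Tail estimate from a finite Grand Lebesgue norm: if
`0 < ‖ξ‖G(ψ) < ∞` with `‖ξ‖G(ψ) = sup_{p > a} |ξ|_p / ψ(p)`, then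
`T_ξ(x) ≤ exp(−[p ↦ p ln ψ(p)]*(ln(x/‖ξ‖G(ψ))))` for `x ≥ 2‖ξ‖G(ψ)`
(the Legendre-transform bound being written as the equivalent infimum over `p > a`). -/
theorem tail_of_GLS_norm {Ω : Type*} [MeasurableSpace Ω] (P : Measure Ω)
    [IsProbabilityMeasure P] (a : ℝ) (ha : 1 ≤ a) (ψ : ℝ → ℝ)
    (hψcont : ContinuousOn ψ (Set.Ioi a)) (hψone : ∀ p ∈ Set.Ioi a, 1 ≤ ψ p)
    (hψinf : (⨅ p : Set.Ioi a, ψ p) = 1)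
    (ξ : Ω → ℝ) (hξ : Measurable ξ) (K : ℝ≥0∞)
    (hK : K = ⨆ p ∈ Set.Ioi a, eLpNorm ξ (ENNReal.ofReal p) P / ENNReal.ofReal (ψ p))
    (hKpos : 0 < K) (hKfin : K < ∞) :
    ∀ x : ℝ, 2 * K.toReal ≤ x →
      max (P {ω | x < ξ ω}) (P {ω | ξ ω < -x}) ≤
        ⨅ p ∈ Set.Ioi a, ENNReal.ofReal
          (Real.exp (-(p * Real.log (x / K.toReal) - p * Real.log (ψ p)))) := by
  intro x hx
  have hKt : 0 < K.toReal := ENNReal.toReal_pos hKpos.ne' hKfin.ne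
  have hx0 : 0 < x := lt_of_lt_of_le (by linarith) hx
  refine le_iInf₂ fun p hp => ?_
  have hp1 : 1 < p := lt_of_le_of_lt ha hp
  have hp0 : 0 < p := by linarith
  have hψ1 : 1 ≤ ψ p := hψone p hp
  have hψ0 : 0 < ψ p := by linarith
  -- moment bound
  have hle : eLpNorm ξ (ENNReal.ofReal p) P ≤ K * ENNReal.ofReal (ψ p) := by
    have h1 : eLpNorm ξ (ENNReal.ofReal p) P / ENNReal.ofReal (ψ p) ≤ K := by
      rw [hK]
      exact le_biSup (fun q => eLpNorm ξ (ENNReal.ofReal q) P / ENNReal.ofReal (ψ q)) hp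
    rwa [ENNReal.div_le_iff (by simp [hψ0]) ENNReal.ofReal_ne_top] at h1
  -- Markov inequality
  have hεne : (ENNReal.ofReal x) ≠ 0 := by simp [hx0]
  have markov := meas_ge_le_mul_pow_eLpNorm_enorm P (p := ENNReal.ofReal p)
    (by simp [hp0]) ENNReal.ofReal_ne_top hξ.aestronglyMeasurable hεne (by simp)
  have htoReal : (ENNReal.ofReal p).toReal = p := ENNReal.toReal_ofReal hp0.le
  rw [htoReal] at markov
  -- tail sets are contained in the Markov set
  have hsub1 : {ω | x < ξ ω} ⊆ {ω | ENNReal.ofReal x ≤ ‖ξ ω‖₊} := by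
    intro ω hω
    simp only [mem_setOf_eq] at hω ⊢
    rw [← enorm_eq_nnnorm, ← ofReal_norm]
    exact ENNReal.ofReal_le_ofReal (le_trans hω.le (le_abs_self _))
  have hsub2 : {ω | ξ ω < -x} ⊆ {ω | ENNReal.ofReal x ≤ ‖ξ ω‖₊} := by
    intro ω hω
    simp only [mem_setOf_eq] at hω ⊢
    rw [← enorm_eq_nnnorm, ← ofReal_norm]
    refine ENNReal.ofReal_le_ofReal ?_
    rw [Real.norm_eq_abs]
    have := neg_le_abs (ξ ω)
    linarith [hω.le]
  have hmax : max (P {ω | x < ξ ω}) (P {ω | ξ ω < -x}) ≤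
      P {ω | ENNReal.ofReal x ≤ ‖ξ ω‖₊} :=
    max_le (measure_mono hsub1) (measure_mono hsub2)
  refine hmax.trans (markov.trans ?_)
  -- now bound (ofReal x)⁻¹ ^ p * (eLpNorm) ^ p
  have hKeq : K = ENNReal.ofReal K.toReal := (ENNReal.ofReal_toReal hKfin.ne).symm
  calc (ENNReal.ofReal x)⁻¹ ^ p * eLpNorm ξ (ENNReal.ofReal p) P ^ p
      ≤ (ENNReal.ofReal x)⁻¹ ^ p * (K * ENNReal.ofReal (ψ p)) ^ p := by
        gcongr
    _ = (K * ENNReal.ofReal (ψ p) / ENNReal.ofReal x) ^ p := by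
        rw [ENNReal.div_rpow_of_nonneg _ _ hp0.le, div_eq_mul_inv, ← ENNReal.inv_rpow]
        exact mul_comm _ _
    _ = (ENNReal.ofReal (K.toReal * ψ p / x)) ^ p := by
        rw [ENNReal.ofReal_div_of_pos hx0, ENNReal.ofReal_mul hKt.le, ENNReal.ofReal_toReal hKfin.ne]
    _ = ENNReal.ofReal ((K.toReal * ψ p / x) ^ p) := by
        rw [← ENNReal.ofReal_rpow_of_nonneg (by positivity) hp0.le]
    _ ≤ ENNReal.ofReal
          (Real.exp (-(p * Real.log (x / K.toReal) - p * Real.log (ψ p)))) := by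
        apply ENNReal.ofReal_le_ofReal
        rw [Real.rpow_def_of_pos (by positivity)]
        apply Real.exp_le_exp.2
        rw [Real.log_div (by positivity) (by positivity),
          Real.log_mul (by positivity) (by positivity),
          Real.log_div (by positivity) (by positivity)]
        ring_nf
        exact le_refl _
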